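/- In the congestion game setting, if a profile x̄ ∈ Π_i X_i is an ε-pure Nash equilibrium of the auxiliary game with costs f̄_i(x_i, x_{−i}) = ⟨g((1/n) Σ_{j≠i} a_j x_j + (1/n) a_i x_i^+), x_i⟩ + r_i(x_i), then x̄ is an (ε + L_h M Δ / n + 2 L_g M Δ² / n)-pure Nash equilibrium of the game with costs f_i(x_i, x_{−i}) = ⟨g((1/n) Σ_j a_j x_j), x_i⟩ + h_i((1/n) Σ_j a_j x_j) + r_i(x_i). -/

import Mathlib

open scoped RealInnerProductSpace

lemma inner_abs_le_key (d : ℕ) (Lg : ℝ) (hLg : 0 ≤ Lg) (gc : Fin d → ℝ → ℝ)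
    (hgc : ∀ t s s', |gc t s - gc t s'| ≤ Lg * |s - s'|)
    (G : EuclideanSpace ℝ (Fin d) → EuclideanSpace ℝ (Fin d))
    (hG : ∀ y t, G y t = gc t (y t)) (u v w : EuclideanSpace ℝ (Fin d)) :
    |⟪G u - G v, w⟫| ≤ Lg * ‖u - v‖ * ‖w‖ := by
  have h1 : ⟪G u - G v, w⟫ = ∑ t, (G u t - G v t) * w t := by
    simp [PiLp.inner_apply, RCLike.inner_apply]; exact Finset.sum_congr rfl fun _ _ => mul_comm _ _
  have hcs : ∑ t, |u t - v t| * |w t| ≤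
      Real.sqrt (∑ t, |u t - v t| ^ 2) * Real.sqrt (∑ t, |w t| ^ 2) := by
    have h2 := Finset.sum_mul_sq_le_sq_mul_sq Finset.univ (fun t => |u t - v t|) (fun t => |w t|)
    have hnn : (0:ℝ) ≤ ∑ t, |u t - v t| * |w t| :=
      Finset.sum_nonneg fun t _ => mul_nonneg (abs_nonneg _) (abs_nonneg _)
    calc ∑ t, |u t - v t| * |w t|
        = Real.sqrt ((∑ t, |u t - v t| * |w t|) ^ 2) := (Real.sqrt_sq hnn).symm
      _ ≤ Real.sqrt ((∑ t, |u t - v t| ^ 2) * ∑ t, |w t| ^ 2) := Real.sqrt_le_sqrt h2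
      _ = _ := Real.sqrt_mul (Finset.sum_nonneg fun t _ => sq_nonneg _) _
  rw [h1]
  calc |∑ t, (G u t - G v t) * w t| ≤ ∑ t, |G u t - G v t| * |w t| := by
        refine (Finset.abs_sum_le_sum_abs _ _).trans ?_
        simp [abs_mul]
    _ ≤ ∑ t, (Lg * |u t - v t|) * |w t| := by
        apply Finset.sum_le_sum
        intro t _
        rw [hG, hG]
        exact mul_le_mul_of_nonneg_right (hgc t (u t) (v t)) (abs_nonneg _)
    _ = Lg * ∑ t, |u t - v t| * |w t| := by
        rw [Finset.mul_sum]; exact Finset.sum_congr rfl fun _ _ => by ring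
    _ ≤ Lg * (Real.sqrt (∑ t, |u t - v t| ^ 2) * Real.sqrt (∑ t, |w t| ^ 2)) :=
        mul_le_mul_of_nonneg_left hcs hLg
    _ = Lg * ‖u - v‖ * ‖w‖ := by
        rw [EuclideanSpace.norm_eq, EuclideanSpace.norm_eq]
        simp [Real.norm_eq_abs, mul_assoc]

lemma smul_norm_bound (n d : ℕ) (M Δ : ℝ) (hM : 0 ≤ M)
    (X : Set (EuclideanSpace ℝ (Fin d)))
    (hΔnorm : ∀ y ∈ convexHull ℝ X, ‖y‖ ≤ Δ)
    (hΔdiam : Metric.diam (convexHull ℝ X) ≤ Δ)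
    (p q : EuclideanSpace ℝ (Fin d)) (hp : p ∈ X) (hq : q ∈ X)
    (c : ℝ) (hc : 0 ≤ c) (hcM : c ≤ M) :
    ‖(n:ℝ)⁻¹ • (c • (p - q))‖ ≤ M * Δ / n := by
  have hbd : Bornology.IsBounded (convexHull ℝ X) := by
    refine (Metric.isBounded_closedBall (x := (0:EuclideanSpace ℝ (Fin d))) (r := Δ)).subset ?_
    intro y hy
    exact Metric.mem_closedBall.mpr (by simpa [dist_zero_right] using hΔnorm y hy)
  have hd : ‖p - q‖ ≤ Δ := by
    rw [← dist_eq_norm]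
    exact (Metric.dist_le_diam_of_mem hbd (subset_convexHull ℝ _ hp)
      (subset_convexHull ℝ _ hq)).trans hΔdiam
  rw [norm_smul, norm_smul, Real.norm_eq_abs, Real.norm_eq_abs, abs_of_nonneg hc,
    abs_of_nonneg (by positivity : (0:ℝ) ≤ (n:ℝ)⁻¹)]
  have h1 : c * ‖p - q‖ ≤ M * Δ := mul_le_mul hcM hd (norm_nonneg _) hM
  calc (n:ℝ)⁻¹ * (c * ‖p - q‖) ≤ (n:ℝ)⁻¹ * (M * Δ) :=
        mul_le_mul_of_nonneg_left h1 (by positivity)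
    _ = M * Δ / n := by ring

/-- An `ε`-PNE of the auxiliary congestion game `Γ̄` is an
`(ε + L_h M Δ / n + 2 L_g M Δ² / n)`-PNE of the original game `Γ`. -/
theorem auxiliary_PNE_transfer (n d : ℕ) (hn : 0 < n) (m M Δ Lg Lh ε : ℝ)
    (hm : 0 < m) (hΔ : 0 ≤ Δ) (hLg : 0 ≤ Lg) (hLh : 0 ≤ Lh) (hε : 0 ≤ ε)
    (X : Fin n → Set (EuclideanSpace ℝ (Fin d))) (hXcp : ∀ i, IsCompact (X i))
    (hΔnorm : ∀ i, ∀ y ∈ convexHull ℝ (X i), ‖y‖ ≤ Δ)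
    (hΔdiam : ∀ i, Metric.diam (convexHull ℝ (X i)) ≤ Δ)
    (gc : Fin d → ℝ → ℝ) (hgc : ∀ t s s', |gc t s - gc t s'| ≤ Lg * |s - s'|)
    (G : EuclideanSpace ℝ (Fin d) → EuclideanSpace ℝ (Fin d))
    (hG : ∀ y t, G y t = gc t (y t))
    (h : Fin n → EuclideanSpace ℝ (Fin d) → ℝ)
    (hh : ∀ i y y', |h i y - h i y'| ≤ Lh * ‖y - y'‖)
    (r : Fin n → EuclideanSpace ℝ (Fin d) → ℝ)
    (a : Fin n → ℝ) (ha : ∀ i, m ≤ a i ∧ a i ≤ M)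
    (xplus : Fin n → EuclideanSpace ℝ (Fin d)) (hxplus : ∀ i, xplus i ∈ X i)
    (fbar f : Fin n → (Fin n → EuclideanSpace ℝ (Fin d)) → ℝ)
    (hfbar : ∀ i x, fbar i x =
      ⟪G ((n : ℝ)⁻¹ • (∑ j ∈ Finset.univ.erase i, a j • x j) +
          (n : ℝ)⁻¹ • (a i • xplus i)), x i⟫ + r i (x i))
    (hf : ∀ i x, f i x = ⟪G ((n : ℝ)⁻¹ • ∑ j, a j • x j), x i⟫ +
      h i ((n : ℝ)⁻¹ • ∑ j, a j • x j) + r i (x i))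
    (xb : Fin n → EuclideanSpace ℝ (Fin d)) (hxb : ∀ i, xb i ∈ X i)
    (hPNE : ∀ i, ∀ y ∈ X i, fbar i xb ≤ fbar i (Function.update xb i y) + ε) :
    ∀ i, ∀ y ∈ X i, f i xb ≤ f i (Function.update xb i y) +
      (ε + Lh * M * Δ / n + 2 * Lg * M * Δ ^ 2 / n) := by
  intro i y hy
  have hai := ha i
  have hai0 : 0 ≤ a i := hm.le.trans hai.1
  have hM0 : 0 ≤ M := hai0.trans hai.2
  set x' := Function.update xb i y with hx'
  have hx'i : x' i = y := Function.update_self i y xb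
  have hsum_erase : ∑ j ∈ Finset.univ.erase i, a j • x' j
      = ∑ j ∈ Finset.univ.erase i, a j • xb j :=
    Finset.sum_congr rfl fun j hj => by
      rw [hx', Function.update_of_ne (Finset.ne_of_mem_erase hj)]
  set E := ∑ j ∈ Finset.univ.erase i, a j • xb j with hE
  have hsplit : ∑ j, a j • xb j = E + a i • xb i := by
    rw [hE]; exact (Finset.sum_erase_add _ _ (Finset.mem_univ i)).symm
  have hsplit' : ∑ j, a j • x' j = E + a i • y := by
    rw [← Finset.sum_erase_add _ _ (Finset.mem_univ i), hsum_erase, hx'i]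
  set z := (n:ℝ)⁻¹ • (E + a i • xb i) with hz
  set z' := (n:ℝ)⁻¹ • (E + a i • y) with hz'
  set zb := (n:ℝ)⁻¹ • E + (n:ℝ)⁻¹ • (a i • xplus i) with hzb
  have Hf1 : f i xb = ⟪G z, xb i⟫ + h i z + r i (xb i) := by rw [hf, hsplit]
  have Hf2 : f i x' = ⟪G z', y⟫ + h i z' + r i y := by rw [hf, hsplit', hx'i]
  have Hfb1 : fbar i xb = ⟪G zb, xb i⟫ + r i (xb i) := by rw [hfbar]
  have Hfb2 : fbar i x' = ⟪G zb, y⟫ + r i y := by rw [hfbar, hsum_erase, hx'i]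
  -- vector difference identities
  have d1 : z - zb = (n:ℝ)⁻¹ • (a i • (xb i - xplus i)) := by
    rw [hz, hzb]; module
  have d2 : z' - zb = (n:ℝ)⁻¹ • (a i • (y - xplus i)) := by
    rw [hz', hzb]; module
  have d3 : z - z' = (n:ℝ)⁻¹ • (a i • (xb i - y)) := by
    rw [hz, hz']; module
  -- norm bounds
  have n1 : ‖z - zb‖ ≤ M * Δ / n := by
    rw [d1]
    exact smul_norm_bound n d M Δ hM0 (X i) (hΔnorm i) (hΔdiam i)
      _ _ (hxb i) (hxplus i) _ hai0 hai.2
  have n2 : ‖z' - zb‖ ≤ M * Δ / n := by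
    rw [d2]
    exact smul_norm_bound n d M Δ hM0 (X i) (hΔnorm i) (hΔdiam i)
      _ _ hy (hxplus i) _ hai0 hai.2
  have n3 : ‖z - z'‖ ≤ M * Δ / n := by
    rw [d3]
    exact smul_norm_bound n d M Δ hM0 (X i) (hΔnorm i) (hΔdiam i)
      _ _ (hxb i) hy _ hai0 hai.2
  have nxb : ‖xb i‖ ≤ Δ := hΔnorm i _ (subset_convexHull ℝ _ (hxb i))
  have ny : ‖y‖ ≤ Δ := hΔnorm i _ (subset_convexHull ℝ _ hy)
  have hMΔn : (0:ℝ) ≤ M * Δ / n := by positivity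
  -- inner product bounds
  have A1 : |⟪G z - G zb, xb i⟫| ≤ Lg * (M * Δ / n) * Δ :=
    (inner_abs_le_key d Lg hLg gc hgc G hG z zb (xb i)).trans
      (mul_le_mul (mul_le_mul_of_nonneg_left n1 hLg) nxb (norm_nonneg _) (by positivity))
  have A2 : |⟪G z' - G zb, y⟫| ≤ Lg * (M * Δ / n) * Δ :=
    (inner_abs_le_key d Lg hLg gc hgc G hG z' zb y).trans
      (mul_le_mul (mul_le_mul_of_nonneg_left n2 hLg) ny (norm_nonneg _) (by positivity))
  have B : |h i z - h i z'| ≤ Lh * (M * Δ / n) :=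
    (hh i z z').trans (mul_le_mul_of_nonneg_left n3 hLh)
  -- expansions
  have exp1 : ⟪G z, xb i⟫ = ⟪G zb, xb i⟫ + ⟪G z - G zb, xb i⟫ := by
    rw [inner_sub_left]; ring
  have exp2 : ⟪G z', y⟫ = ⟪G zb, y⟫ + ⟪G z' - G zb, y⟫ := by
    rw [inner_sub_left]; ring
  have hPNEi := hPNE i y hy
  have e1 : Lg * (M * Δ / n) * Δ = Lg * M * Δ ^ 2 / n := by ring
  have e2 : Lh * (M * Δ / n) = Lh * M * Δ / n := by ring
  have A1' := abs_le.mp A1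
  have A2' := abs_le.mp A2
  have B' := abs_le.mp B
  rw [← hx'] at hPNEi
  have s1 : f i xb ≤ fbar i x' + ε + Lg * (M * Δ / ↑n) * Δ + h i z := by
    have key1 : f i xb = fbar i xb + ⟪G z - G zb, xb i⟫ + h i z := by
      rw [Hf1, Hfb1, exp1]; ring
    linarith [A1'.2, key1, hPNEi]
  have s2 : fbar i x' ≤ f i x' + Lg * (M * Δ / ↑n) * Δ - h i z' := by
    have key2 : f i x' = fbar i x' + ⟪G z' - G zb, y⟫ + h i z' := by
      rw [Hf2, Hfb2, exp2]; ring
    linarith [A2'.1, key2]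
  have s3 : h i z ≤ h i z' + Lh * (M * Δ / ↑n) := by linarith [B'.2]
  have egoal : ε + Lh * M * Δ / ↑n + 2 * Lg * M * Δ ^ 2 / ↑n
      = ε + Lh * (M * Δ / ↑n) + 2 * (Lg * (M * Δ / ↑n) * Δ) := by ring
  rw [egoal]
  linarith [s1, s2, s3]
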